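/- In k[x,y,z], let F be a form of degree d−3 and f_1,...,f_{d-3} forms of degree d−2 such that I = ⟨f_1,...,f_{d-3},F⟩ has a Hilbert–Burch resolution 0 → R(−d+1)^{d−3} → R(−d+3)⊕R(−d+2)^{d−3} → R → R/I → 0. Then the ideal L = ⟨f_1,...,f_{d-3}, xF, yF, zF⟩ has a free resolution of the form 0 → R(−d) → R(−d+1)^d → R(−d+2)^d → R → R/L → 0; in particular L has d minimal generators of degree d−2, d linear first syzygies, and one linear second syzygy. -/

import Mathlib

open MvPolynomial

namespace Stmt14Aux

variable {k : Type*} [Field k]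

/-- Substitution killing variable `i`. -/
noncomputable def sub0 (i : Fin 3) :
    MvPolynomial (Fin 3) k →ₐ[k] MvPolynomial (Fin 3) k :=
  aeval (fun j => if j = i then (0 : MvPolynomial (Fin 3) k) else X j)

lemma sub0_X (i j : Fin 3) :
    sub0 (k := k) i (X j) = if j = i then 0 else X j := by
  simp [sub0]

lemma sub0_C (i : Fin 3) (a : k) : sub0 i (C a) = C a := by
  simp [sub0, algebraMap_eq]

lemma split (i : Fin 3) (p : MvPolynomial (Fin 3) k) :
    ∃ h, p = sub0 i p + X i * h := by
  induction p using MvPolynomial.induction_on with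
  | C a => exact ⟨0, by simp [sub0_C]⟩
  | add p q hp hq =>
      obtain ⟨a, ha⟩ := hp; obtain ⟨b, hb⟩ := hq
      exact ⟨a + b, by rw [map_add]; linear_combination ha + hb⟩
  | mul_X p j hp =>
      obtain ⟨a, ha⟩ := hp
      by_cases hj : j = i
      · subst hj
        refine ⟨p, ?_⟩
        rw [map_mul, sub0_X, if_pos rfl]
        ring
      · refine ⟨a * X j, ?_⟩
        rw [map_mul, sub0_X, if_neg hj]
        linear_combination X j * ha

lemma killall (q : MvPolynomial (Fin 3) k) :
    sub0 2 (sub0 1 (sub0 0 q)) = C (constantCoeff q) := by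
  induction q using MvPolynomial.induction_on with
  | C a => simp [sub0_C]
  | add p q hp hq => simp [map_add, hp, hq]
  | mul_X p j hp =>
      rw [map_mul, map_mul, map_mul]
      fin_cases j <;>
        simp [sub0_X, hp]

lemma homog_of_X_mul {h : MvPolynomial (Fin 3) k} {i : Fin 3} {n : ℕ}
    (hp : (X i * h).IsHomogeneous (n + 1)) : h.IsHomogeneous n := by
  intro d hd
  have h2 : coeff (Finsupp.single i 1 + d) (X i * h) ≠ 0 := by
    rwa [coeff_X_mul]
  have h3 := hp h2
  rw [map_add] at h3
  have h4 : (Finsupp.weight (1 : Fin 3 → ℕ)) (Finsupp.single i 1) = 1 := by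
    simp [Finsupp.weight_apply, Finsupp.sum_single_index]
  rw [h4] at h3
  omega

lemma decomp {q : MvPolynomial (Fin 3) k} (hq : q.IsHomogeneous 2) :
    ∃ Q : Fin 3 → MvPolynomial (Fin 3) k, (∀ a, (Q a).IsHomogeneous 1) ∧
      q = ∑ a : Fin 3, X a * Q a := by
  obtain ⟨h0, e0⟩ := split 0 q
  obtain ⟨h1, e1⟩ := split 1 (sub0 0 q)
  obtain ⟨h2, e2⟩ := split 2 (sub0 1 (sub0 0 q))
  have hk : sub0 (k := k) 2 (sub0 1 (sub0 0 q)) = 0 := by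
    rw [killall]
    have : constantCoeff q = 0 := by
      have := hq.coeff_eq_zero (d := 0) (by simp)
      simpa [constantCoeff_eq] using this
    rw [this, map_zero]
  have hq' : q = X 0 * h0 + X 1 * h1 + X 2 * h2 := by
    rw [e0, e1, e2, hk]; ring
  have hsub : ∀ (i : Fin 3) (p : MvPolynomial (Fin 3) k),
      p.IsHomogeneous 2 → ((sub0 i p).IsHomogeneous 2) := by
    intro i p hp
    have := hp.aeval (n := 1) (fun j => if j = i then (0 : MvPolynomial (Fin 3) k) else X j)
      (fun j => by split_ifs; exacts [isHomogeneous_zero _ _ _, isHomogeneous_X _ _])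
    simpa [sub0] using this
  have hh0 : h0.IsHomogeneous 1 := by
    refine homog_of_X_mul (i := 0) (n := 1) ?_
    have : X (0:Fin 3) * h0 = q - sub0 0 q := by linear_combination -e0
    rw [this]; exact hq.sub (hsub 0 q hq)
  have hh1 : h1.IsHomogeneous 1 := by
    refine homog_of_X_mul (i := 1) (n := 1) ?_
    have : X (1:Fin 3) * h1 = sub0 0 q - sub0 1 (sub0 0 q) := by linear_combination -e1
    rw [this]; exact (hsub 0 q hq).sub (hsub 1 _ (hsub 0 q hq))
  have hh2 : h2.IsHomogeneous 1 := by
    refine homog_of_X_mul (i := 2) (n := 1) ?_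
    have : X (2:Fin 3) * h2 = sub0 1 (sub0 0 q) := by
      rw [e2, hk]; ring
    rw [this]; exact hsub 1 _ (hsub 0 q hq)
  refine ⟨![h0, h1, h2], ?_, ?_⟩
  · intro a; fin_cases a <;> simpa
  · rw [Fin.sum_univ_three]; simpa using hq'

lemma koszul_syz {g : Fin 3 → MvPolynomial (Fin 3) k}
    (hg : X 0 * g 0 + X 1 * g 1 + X 2 * g 2 = 0) :
    ∃ w : Fin 3 → MvPolynomial (Fin 3) k,
      g 0 = X 2 * w 1 - X 1 * w 2 ∧ g 1 = X 0 * w 2 - X 2 * w 0 ∧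
      g 2 = X 1 * w 0 - X 0 * w 1 := by
  obtain ⟨h1, e1⟩ := split 0 (g 1)
  obtain ⟨h2, e2⟩ := split 0 (g 2)
  have hs : X 1 * sub0 0 (g 1) + X 2 * sub0 0 (g 2) = 0 := by
    have h := congrArg (sub0 (k := k) 0) hg
    rw [map_add, map_add, map_mul, map_mul, map_mul, sub0_X, sub0_X, sub0_X,
      if_pos rfl, if_neg (by decide : (1:Fin 3) ≠ 0), if_neg (by decide : (2:Fin 3) ≠ 0),
      zero_mul, zero_add, map_zero] at h
    exact h
  obtain ⟨c, ec⟩ := split 2 (sub0 0 (g 1))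
  have hz : sub0 (k := k) 2 (sub0 0 (g 1)) = 0 := by
    have h := congrArg (sub0 (k := k) 2) hs
    rw [map_add, map_mul, map_mul, sub0_X, sub0_X, if_neg (by decide : (1:Fin 3) ≠ 2),
      if_pos rfl, zero_mul, add_zero, map_zero] at h
    rcases mul_eq_zero.mp h with h' | h'
    · exact absurd h' (X_ne_zero 1)
    · exact h'
  have eg1 : sub0 (k := k) 0 (g 1) = X 2 * c := by rw [ec, hz, zero_add]
  have eg2 : sub0 (k := k) 0 (g 2) = -(X 1 * c) := by
    have hc : X 2 * sub0 (k := k) 0 (g 2) = X 2 * (-(X 1 * c)) := by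
      linear_combination hs - X 1 * eg1
    exact mul_left_cancel₀ (X_ne_zero 2) hc
  have eg0 : g 0 = -(X 1 * h1) - X 2 * h2 := by
    have hx : X (0:Fin 3) * (g 0 + X 1 * h1 + X 2 * h2) = X 0 * 0 := by
      linear_combination hg - X 1 * e1 - X 2 * e2 - X 1 * eg1 - X 2 * eg2
    have := mul_left_cancel₀ (X_ne_zero 0) hx
    linear_combination this
  refine ⟨![-c, -h2, h1], ?_, ?_, ?_⟩
  · simp only [Matrix.cons_val_zero, Matrix.cons_val_one, Matrix.head_cons, Matrix.cons_val_two, Matrix.tail_cons]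
    linear_combination eg0
  · simp only [Matrix.cons_val_zero, Matrix.cons_val_two, Matrix.tail_cons, Matrix.head_cons]
    linear_combination e1 + eg1
  · simp only [Matrix.cons_val_zero, Matrix.cons_val_one, Matrix.head_cons]
    linear_combination e2 + eg2

lemma koszul_ker {w : Fin 3 → MvPolynomial (Fin 3) k}
    (k0 : X 2 * w 1 - X 1 * w 2 = 0) (k1 : X 0 * w 2 - X 2 * w 0 = 0)
    (k2 : X 1 * w 0 - X 0 * w 1 = 0) :
    ∃ r, w 0 = X 0 * r ∧ w 1 = X 1 * r ∧ w 2 = X 2 * r := by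
  obtain ⟨r, er⟩ := split 0 (w 0)
  have hz : sub0 (k := k) 0 (w 0) = 0 := by
    have h := congrArg (sub0 (k := k) 0) k2
    rw [map_sub, map_mul, map_mul, sub0_X, sub0_X, if_neg (by decide : (1:Fin 3) ≠ 0),
      if_pos rfl, zero_mul, sub_zero, map_zero] at h
    rcases mul_eq_zero.mp h with h' | h'
    · exact absurd h' (X_ne_zero 1)
    · exact h'
  have ew0 : w 0 = X 0 * r := by rw [er, hz, zero_add]
  have ew1 : w 1 = X 1 * r := by
    have hc : X (0:Fin 3) * w 1 = X 0 * (X 1 * r) := by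
      linear_combination -k2 + X 1 * ew0
    exact mul_left_cancel₀ (X_ne_zero 0) hc
  have ew2 : w 2 = X 2 * r := by
    have hc : X (0:Fin 3) * w 2 = X 0 * (X 2 * r) := by
      linear_combination k1 + X 2 * ew0
    exact mul_left_cancel₀ (X_ne_zero 0) hc
  exact ⟨r, ew0, ew1, ew2⟩

end Stmt14Aux

set_option maxHeartbeats 1000000 in
/-- The Hilbert–Burch resolution of `I = ⟨f₁,…,f_{d-3},F⟩` and the claimed resolution of
`L = ⟨f₁,…,f_{d-3}, xF, yF, zF⟩` are expressed as exact sequences of explicit maps given by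
matrices whose entries are homogeneous of the degrees forced by the graded twists. -/
theorem stmt14 (d : ℕ) (hd : 5 ≤ d) (k : Type*) [Field k]
    (F : MvPolynomial (Fin 3) k) (f : Fin (d - 3) → MvPolynomial (Fin 3) k)
    (hF : F.IsHomogeneous (d - 3)) (hf : ∀ i, (f i).IsHomogeneous (d - 2))
    (I : Ideal (MvPolynomial (Fin 3) k))
    (hI : I = Ideal.span (Set.range f ∪ {F}))
    (HB : ∃ B₁ : Matrix (Fin (d - 3) ⊕ Unit) (Fin (d - 3)) (MvPolynomial (Fin 3) k),
      (∀ i j, (B₁ (Sum.inl i) j).IsHomogeneous 1) ∧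
      (∀ j, (B₁ (Sum.inr ()) j).IsHomogeneous 2) ∧
      Function.Injective (fun c : Fin (d - 3) → MvPolynomial (Fin 3) k => B₁.mulVec c) ∧
      Function.Exact (fun c : Fin (d - 3) → MvPolynomial (Fin 3) k => B₁.mulVec c)
        (fun g : Fin (d - 3) ⊕ Unit → MvPolynomial (Fin 3) k =>
          (∑ i, g (Sum.inl i) * f i) + g (Sum.inr ()) * F) ∧
      Set.range (fun g : Fin (d - 3) ⊕ Unit → MvPolynomial (Fin 3) k =>
          (∑ i, g (Sum.inl i) * f i) + g (Sum.inr ()) * F) = (I : Set (MvPolynomial (Fin 3) k)))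
    (L : Ideal (MvPolynomial (Fin 3) k))
    (hL : L = Ideal.span (Set.range f ∪ Set.range fun c : Fin 3 => X c * F)) :
    ∃ (A : Fin d → MvPolynomial (Fin 3) k)
      (B₂ : Matrix (Fin (d - 3) ⊕ Fin 3) (Fin d) (MvPolynomial (Fin 3) k)),
      (∀ i, (A i).IsHomogeneous 1) ∧
      (∀ i j, (B₂ i j).IsHomogeneous 1) ∧
      Function.Injective (fun r : MvPolynomial (Fin 3) k => fun i : Fin d => A i * r) ∧
      Function.Exact (fun r : MvPolynomial (Fin 3) k => fun i : Fin d => A i * r)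
        (fun c : Fin d → MvPolynomial (Fin 3) k => B₂.mulVec c) ∧
      Function.Exact (fun c : Fin d → MvPolynomial (Fin 3) k => B₂.mulVec c)
        (fun g : Fin (d - 3) ⊕ Fin 3 → MvPolynomial (Fin 3) k =>
          (∑ i, g (Sum.inl i) * f i) + ∑ c : Fin 3, g (Sum.inr c) * (X c * F)) ∧
      Set.range (fun g : Fin (d - 3) ⊕ Fin 3 → MvPolynomial (Fin 3) k =>
          (∑ i, g (Sum.inl i) * f i) + ∑ c : Fin 3, g (Sum.inr c) * (X c * F))
        = (L : Set (MvPolynomial (Fin 3) k)) := by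
  classical
  obtain ⟨B₁, hlin, hquad, hinj, hex, hrange⟩ := HB
  choose Q hQhom hQeq using fun j => Stmt14Aux.decomp (hquad j)
  set K : Matrix (Fin 3) (Fin 3) (MvPolynomial (Fin 3) k) :=
    ![![0, X 2, -X 1], ![-X 2, 0, X 0], ![X 1, -X 0, 0]] with hKdef
  set M : Matrix (Fin (d - 3) ⊕ Fin 3) (Fin (d - 3) ⊕ Fin 3) (MvPolynomial (Fin 3) k) :=
    fun s t => Sum.elim
      (fun i => Sum.elim (fun j => B₁ (Sum.inl i) j) (fun _ => 0) t)
      (fun a => Sum.elim (fun j => Q j a) (fun b => K a b) t) s with hMdef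
  have hd3 : d - 3 + 3 = d := by omega
  set e : Fin (d - 3) ⊕ Fin 3 ≃ Fin d := finSumFinEquiv.trans (finCongr hd3) with hedef
  set A : Fin d → MvPolynomial (Fin 3) k :=
    fun jd => Sum.elim (fun _ => (0 : MvPolynomial (Fin 3) k)) (fun a => X a) (e.symm jd)
    with hAdef
  -- basic expansion lemmas
  have hKmul : ∀ w : Fin 3 → MvPolynomial (Fin 3) k,
      K.mulVec w = ![X 2 * w 1 - X 1 * w 2, X 0 * w 2 - X 2 * w 0,
        X 1 * w 0 - X 0 * w 1] := by
    intro w; funext a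
    fin_cases a <;>
      simp [hKdef, Matrix.mulVec, dotProduct, Fin.sum_univ_three, Matrix.vecHead, Matrix.vecTail] <;> ring
  have hKtriv : ∀ w : Fin 3 → MvPolynomial (Fin 3) k,
      ∑ a : Fin 3, X a * K.mulVec w a = 0 := by
    intro w
    rw [hKmul w, Fin.sum_univ_three]
    simp only [Matrix.cons_val_zero, Matrix.cons_val_one, Matrix.head_cons,
      Matrix.cons_val_two, Matrix.tail_cons]
    ring
  have hK0 : ∀ w : Fin 3 → MvPolynomial (Fin 3) k,
      K.mulVec w 0 = X 2 * w 1 - X 1 * w 2 := by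
    intro w; rw [hKmul]; simp
  have hK1 : ∀ w : Fin 3 → MvPolynomial (Fin 3) k,
      K.mulVec w 1 = X 0 * w 2 - X 2 * w 0 := by
    intro w; rw [hKmul]; simp
  have hK2 : ∀ w : Fin 3 → MvPolynomial (Fin 3) k,
      K.mulVec w 2 = X 1 * w 0 - X 0 * w 1 := by
    intro w; rw [hKmul]; simp
  have hMl : ∀ (u : Fin (d - 3) ⊕ Fin 3 → MvPolynomial (Fin 3) k) i,
      M.mulVec u (Sum.inl i) = ∑ j, B₁ (Sum.inl i) j * u (Sum.inl j) := by
    intro u i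
    simp [hMdef, Matrix.mulVec, dotProduct, Fintype.sum_sum_type]
  have hMr : ∀ (u : Fin (d - 3) ⊕ Fin 3 → MvPolynomial (Fin 3) k) a,
      M.mulVec u (Sum.inr a) =
        (∑ j, Q j a * u (Sum.inl j)) + K.mulVec (fun b => u (Sum.inr b)) a := by
    intro u a
    simp [hMdef, Matrix.mulVec, dotProduct, Fintype.sum_sum_type]
  have hswap : ∀ c : Fin (d - 3) → MvPolynomial (Fin 3) k,
      ∑ j, B₁ (Sum.inr ()) j * c j = ∑ a : Fin 3, X a * ∑ j, Q j a * c j := by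
    intro c
    have h1 : ∀ j, B₁ (Sum.inr ()) j * c j = ∑ a : Fin 3, X a * (Q j a * c j) := by
      intro j
      rw [hQeq j, Finset.sum_mul]
      exact Finset.sum_congr rfl fun a _ => by ring
    rw [Finset.sum_congr rfl fun j _ => h1 j, Finset.sum_comm]
    exact Finset.sum_congr rfl fun a _ => by rw [Finset.mul_sum]
  have hsub : ∀ v : Fin d → MvPolynomial (Fin 3) k,
      (M.submatrix id e.symm).mulVec v = M.mulVec (v ∘ e) := by
    intro v
    rw [Matrix.submatrix_mulVec_equiv]
    simp
  refine ⟨A, M.submatrix id e.symm, ?_, ?_, ?_, ?_, ?_, ?_⟩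
  · -- A homogeneous of degree 1
    intro j
    rw [hAdef]
    cases h : e.symm j with
    | inl i => simp only [h, Sum.elim_inl]; exact isHomogeneous_zero _ _ _
    | inr a => simp only [h, Sum.elim_inr]; exact isHomogeneous_X _ _
  · -- B₂ entries homogeneous
    have hKhom : ∀ a b : Fin 3, (K a b).IsHomogeneous 1 := by
      intro a b
      fin_cases a <;> fin_cases b <;>
        simp only [hKdef, Matrix.cons_val', Matrix.cons_val_zero, Matrix.cons_val_one,
          Matrix.head_cons, Matrix.cons_val_two, Matrix.tail_cons, Matrix.empty_val',
          Matrix.cons_val_fin_one, Matrix.head_fin_const] <;>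
        first
          | exact isHomogeneous_zero _ _ _
          | exact isHomogeneous_X _ _
          | exact (isHomogeneous_X _ _).neg
    intro s j
    rw [Matrix.submatrix_apply, hMdef]
    cases s with
    | inl i =>
        cases h : e.symm j with
        | inl j' => simp only [Sum.elim_inl]; exact hlin i j'
        | inr b => simp only [Sum.elim_inl, Sum.elim_inr]; exact isHomogeneous_zero _ _ _
    | inr a =>
        cases h : e.symm j with
        | inl j' => simp only [Sum.elim_inr, Sum.elim_inl]; exact hQhom j' a
        | inr b => simp only [Sum.elim_inr]; exact hKhom a b
  · -- injectivity of r ↦ A · r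
    intro r r' h
    have h2 := congrFun h (e (Sum.inr 0))
    simp only [hAdef, Equiv.symm_apply_apply, Sum.elim_inr] at h2
    exact mul_left_cancel₀ (X_ne_zero 0) h2
  · -- exactness at R(-d+1)^d
    intro v
    constructor
    · intro hv
      have hv' : M.mulVec (v ∘ e) = 0 := by rw [← hsub]; exact hv
      have hrow := fun s => congrFun hv' s
      set c : Fin (d - 3) → MvPolynomial (Fin 3) k := fun j => v (e (Sum.inl j)) with hcdef
      set w : Fin 3 → MvPolynomial (Fin 3) k := fun b => v (e (Sum.inr b)) with hwdef
      have hra : ∀ a, (∑ j, Q j a * c j) + K.mulVec w a = 0 := by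
        intro a
        have := hrow (Sum.inr a)
        rw [hMr] at this
        exact this
      have hcl : B₁.mulVec c = 0 := by
        funext s
        cases s with
        | inl i =>
            have := hrow (Sum.inl i)
            rw [hMl] at this
            simpa [Matrix.mulVec, dotProduct] using this
        | inr u =>
            cases u
            show ∑ j, B₁ (Sum.inr ()) j * c j = 0
            rw [hswap]
            have h2 : ∀ a : Fin 3, ∑ j, Q j a * c j = -(K.mulVec w a) := by
              intro a; linear_combination hra a
            calc ∑ a : Fin 3, X a * ∑ j, Q j a * c j
                = ∑ a : Fin 3, -(X a * K.mulVec w a) := by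
                  exact Finset.sum_congr rfl fun a _ => by rw [h2 a]; ring
              _ = -∑ a : Fin 3, X a * K.mulVec w a := by rw [Finset.sum_neg_distrib]
              _ = 0 := by rw [hKtriv w, neg_zero]
      have hc0 : c = 0 := by
        apply hinj
        show B₁.mulVec c = B₁.mulVec 0
        rw [Matrix.mulVec_zero, hcl]
      have hKw : ∀ a, K.mulVec w a = 0 := by
        intro a
        have := hra a
        rw [hc0] at this
        simpa using this
      have hKw' := hKw
      rw [show (K.mulVec w) = ![X 2 * w 1 - X 1 * w 2, X 0 * w 2 - X 2 * w 0,
          X 1 * w 0 - X 0 * w 1] from hKmul w] at hKw'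
      obtain ⟨r, hw0, hw1, hw2⟩ := Stmt14Aux.koszul_ker
        (by simpa using hKw' 0) (by simpa using hKw' 1) (by simpa using hKw' 2)
      refine ⟨r, ?_⟩
      funext j
      have hj : v j = (v ∘ e) (e.symm j) := by simp
      rw [hAdef]
      cases h : e.symm j with
      | inl i =>
          simp only [h, Sum.elim_inl, zero_mul]
          rw [hj, h]
          exact (congrFun hc0 i).symm
      | inr a =>
          simp only [h, Sum.elim_inr]
          rw [hj, h]
          show X a * r = w a
          fin_cases a
          · exact hw0.symm
          · exact hw1.symm
          · exact hw2.symm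
    · rintro ⟨r, rfl⟩
      show (M.submatrix id e.symm).mulVec _ = 0
      rw [hsub]
      have hu : ((fun i => A i * r) ∘ e) =
          Sum.elim (fun _ : Fin (d - 3) => (0 : MvPolynomial (Fin 3) k))
            (fun b => X b * r) := by
        funext s
        cases s with
        | inl i => simp [hAdef]
        | inr b => simp [hAdef]
      rw [hu]
      funext s
      cases s with
      | inl i =>
          rw [hMl]
          simp
      | inr a =>
          rw [hMr]
          simp only [Sum.elim_inl, Sum.elim_inr, mul_zero, Finset.sum_const_zero, zero_add]
          fin_cases a
          · show K.mulVec (fun b => X b * r) 0 = 0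
            rw [hK0]; ring
          · show K.mulVec (fun b => X b * r) 1 = 0
            rw [hK1]; ring
          · show K.mulVec (fun b => X b * r) 2 = 0
            rw [hK2]; ring
  · -- exactness at R(-d+2)^d
    intro g
    constructor
    · intro hg0
      have hmul : (∑ a : Fin 3, X a * g (Sum.inr a)) * F
          = ∑ a : Fin 3, g (Sum.inr a) * (X a * F) := by
        rw [Finset.sum_mul]
        exact Finset.sum_congr rfl fun a _ => by ring
      have hphi : (∑ i, g (Sum.inl i) * f i)
          + (∑ a : Fin 3, X a * g (Sum.inr a)) * F = 0 := by
        rw [hmul]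
        exact hg0
      obtain ⟨c, hc⟩ := (hex (Sum.elim (fun i => g (Sum.inl i))
        (fun _ => ∑ a : Fin 3, X a * g (Sum.inr a)))).mp (by simpa using hphi)
      have hc' := fun s => congrFun hc s
      have hcl : ∀ i, ∑ j, B₁ (Sum.inl i) j * c j = g (Sum.inl i) := by
        intro i
        simpa [Matrix.mulVec, dotProduct] using hc' (Sum.inl i)
      have hcr : ∑ j, B₁ (Sum.inr ()) j * c j = ∑ a : Fin 3, X a * g (Sum.inr a) := by
        simpa [Matrix.mulVec, dotProduct] using hc' (Sum.inr ())
      have hs2 := hswap c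
      rw [Fin.sum_univ_three] at hs2
      rw [Fin.sum_univ_three] at hcr
      have hsyz : X 0 * (g (Sum.inr 0) - ∑ j, Q j 0 * c j)
          + X 1 * (g (Sum.inr 1) - ∑ j, Q j 1 * c j)
          + X 2 * (g (Sum.inr 2) - ∑ j, Q j 2 * c j) = 0 := by
        linear_combination hs2 - hcr
      obtain ⟨w, hw0, hw1, hw2⟩ := Stmt14Aux.koszul_syz
        (g := fun a => g (Sum.inr a) - ∑ j, Q j a * c j) hsyz
      refine ⟨Sum.elim c w ∘ e.symm, ?_⟩
      show (M.submatrix id e.symm).mulVec _ = g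
      rw [hsub]
      have hcomp : (Sum.elim c w ∘ e.symm) ∘ e = Sum.elim c w := by
        funext s; simp
      rw [hcomp]
      funext s
      cases s with
      | inl i =>
          rw [hMl]
          simpa using hcl i
      | inr a =>
          rw [hMr]
          simp only [Sum.elim_inl, Sum.elim_inr]
          fin_cases a
          · show (∑ j, Q j 0 * c j) + K.mulVec w 0 = g (Sum.inr 0)
            rw [hK0]; linear_combination -hw0
          · show (∑ j, Q j 1 * c j) + K.mulVec w 1 = g (Sum.inr 1)
            rw [hK1]; linear_combination -hw1
          · show (∑ j, Q j 2 * c j) + K.mulVec w 2 = g (Sum.inr 2)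
            rw [hK2]; linear_combination -hw2
    · rintro ⟨v, rfl⟩
      show (∑ i, ((M.submatrix id e.symm).mulVec v) (Sum.inl i) * f i)
        + ∑ a : Fin 3, ((M.submatrix id e.symm).mulVec v) (Sum.inr a) * (X a * F) = 0
      rw [hsub]
      have hkey := (hex (B₁.mulVec fun j => (v ∘ e) (Sum.inl j))).mpr ⟨_, rfl⟩
      simp only [Matrix.mulVec, dotProduct] at hkey
      simp only [hMl, hMr]
      have e1 : ∑ a : Fin 3, (∑ j, Q j a * (v ∘ e) (Sum.inl j)) * (X a * F)
          = (∑ j, B₁ (Sum.inr ()) j * (v ∘ e) (Sum.inl j)) * F := by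
        rw [hswap, Finset.sum_mul]
        exact Finset.sum_congr rfl fun a _ => by ring
      have e2 : ∑ a : Fin 3,
          K.mulVec (fun b => (v ∘ e) (Sum.inr b)) a * (X a * F) = 0 := by
        have h3 := hKtriv (fun b => (v ∘ e) (Sum.inr b))
        calc ∑ a : Fin 3, K.mulVec (fun b => (v ∘ e) (Sum.inr b)) a * (X a * F)
            = (∑ a : Fin 3, X a * K.mulVec (fun b => (v ∘ e) (Sum.inr b)) a) * F := by
              rw [Finset.sum_mul]
              exact Finset.sum_congr rfl fun a _ => by ring
          _ = 0 := by rw [h3, zero_mul]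
      calc (∑ i, (∑ j, B₁ (Sum.inl i) j * (v ∘ e) (Sum.inl j)) * f i)
            + ∑ a : Fin 3, ((∑ j, Q j a * (v ∘ e) (Sum.inl j))
              + K.mulVec (fun b => (v ∘ e) (Sum.inr b)) a) * (X a * F)
          = (∑ i, (∑ j, B₁ (Sum.inl i) j * (v ∘ e) (Sum.inl j)) * f i)
            + ((∑ a : Fin 3, (∑ j, Q j a * (v ∘ e) (Sum.inl j)) * (X a * F))
              + ∑ a : Fin 3,
                K.mulVec (fun b => (v ∘ e) (Sum.inr b)) a * (X a * F)) := by
            rw [← Finset.sum_add_distrib]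
            congr 1
            exact Finset.sum_congr rfl fun a _ => by ring
        _ = 0 := by
            rw [e1, e2, add_zero]
            simpa using hkey
  · -- range equals L
    ext x
    simp only [Set.mem_range, SetLike.mem_coe]
    constructor
    · rintro ⟨g, rfl⟩
      rw [hL]
      refine Ideal.add_mem _ ?_ ?_
      · exact Ideal.sum_mem _ fun i _ => Ideal.mul_mem_left _ _
          (Ideal.subset_span (Or.inl ⟨i, rfl⟩))
      · exact Ideal.sum_mem _ fun a _ => Ideal.mul_mem_left _ _
          (Ideal.subset_span (Or.inr ⟨a, rfl⟩))
    · intro hx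
      rw [hL] at hx
      refine Submodule.span_induction ?_ ?_ ?_ ?_ hx
      · rintro y (⟨i, rfl⟩ | ⟨a, rfl⟩)
        · refine ⟨Sum.elim (fun i' => if i' = i then 1 else 0) 0, ?_⟩
          simp [Sum.elim_inl, Sum.elim_inr, ite_mul, Finset.sum_ite_eq']
        · refine ⟨Sum.elim 0 (fun b => if b = a then 1 else 0), ?_⟩
          simp [Sum.elim_inl, Sum.elim_inr, ite_mul, Finset.sum_ite_eq']
      · exact ⟨0, by simp⟩
      · rintro y z - - ⟨g1, rfl⟩ ⟨g2, rfl⟩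
        refine ⟨g1 + g2, ?_⟩
        simp only [Pi.add_apply, add_mul, Finset.sum_add_distrib]
        ring
      · rintro a y - ⟨g1, rfl⟩
        refine ⟨fun s => a * g1 s, ?_⟩
        simp only [smul_eq_mul, mul_add, Finset.mul_sum]
        congr 1 <;> exact Finset.sum_congr rfl fun s _ => by ring
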